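/- Let A ∈ ℝ^{n×n}, B ∈ ℝ^{n×m}, C ∈ ℝ^{p×n}, and let u, x, y satisfy x(t+1) = A·x(t) + B·u(t) and y(t) = C·x(t) for all t. Fix L ≥ 1 and sample times t_1, …, t_N with t_k ≥ L for all k. Then the matrix D ∈ ℝ^{(m(L+1)+pL)×N} whose k-th column is the vector (u(t_k), ξ_{t_k}) = (u(t_k), u_{t_k,L}, y_{t_k,L}) has rank at most m(L+1) + n. In particular, if p·L > n, this matrix never has full row rank. -/

import Mathlib

open Matrix Finset

/-- Stacked past inputs `u_{t,L} = (u(t−1), …, u(t−L))`, most recent first. -/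
def uStack (m L : ℕ) (u : ℕ → Fin m → ℝ) (t : ℕ) : Fin L × Fin m → ℝ :=
  fun jb => u (t - 1 - (jb.1 : ℕ)) jb.2

/-- Stacked past outputs `y_{t,L} = (y(t−1), …, y(t−L))`, most recent first. -/
def yStack (p L : ℕ) (y : ℕ → Fin p → ℝ) (t : ℕ) : Fin L × Fin p → ℝ :=
  fun jc => y (t - 1 - (jc.1 : ℕ)) jc.2

/-- The non-minimal state `ξ_t = (u_{t,L}, y_{t,L})`. -/
def xiState (m p L : ℕ) (u : ℕ → Fin m → ℝ) (y : ℕ → Fin p → ℝ) (t : ℕ) :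
    (Fin L × Fin m) ⊕ (Fin L × Fin p) → ℝ :=
  Sum.elim (uStack m L u t) (yStack p L y t)

lemma mulVec_sum' {α n' m' : Type*} [Fintype m'] [Fintype n'] [NonUnitalNonAssocSemiring α]
    {ι : Type*} (s : Finset ι) (A : Matrix n' m' α) (f : ι → m' → α) :
    A.mulVec (∑ i ∈ s, f i) = ∑ i ∈ s, A.mulVec (f i) := by
  classical
  induction s using Finset.induction with
  | empty => simp
  | insert _ _ h ih => rw [Finset.sum_insert h, Finset.sum_insert h, Matrix.mulVec_add, ih]

lemma state_sol {n m : ℕ} (A : Matrix (Fin n) (Fin n) ℝ) (B : Matrix (Fin n) (Fin m) ℝ)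
    (u : ℕ → Fin m → ℝ) (x : ℕ → Fin n → ℝ)
    (hdyn : ∀ t : ℕ, x (t + 1) = A.mulVec (x t) + B.mulVec (u t)) (s : ℕ) :
    ∀ d : ℕ, x (s + d) = (A ^ d).mulVec (x s)
      + ∑ i ∈ Finset.range d, ((A ^ (d - 1 - i)) * B).mulVec (u (s + i)) := by
  intro d
  induction d with
  | zero => simp
  | succ d ih =>
    have hstep : s + (d + 1) = (s + d) + 1 := by omega
    rw [hstep, hdyn, ih, Matrix.mulVec_add, mulVec_sum']
    rw [Finset.sum_range_succ]
    have h1 : A.mulVec ((A ^ d).mulVec (x s)) = (A ^ (d + 1)).mulVec (x s) := by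
      rw [Matrix.mulVec_mulVec, ← pow_succ']
    have h2 : ∀ i ∈ Finset.range d,
        A.mulVec (((A ^ (d - 1 - i)) * B).mulVec (u (s + i)))
          = ((A ^ (d + 1 - 1 - i)) * B).mulVec (u (s + i)) := by
      intro i hi
      rw [Finset.mem_range] at hi
      have he : d + 1 - 1 - i = (d - 1 - i) + 1 := by omega
      rw [he, Matrix.mulVec_mulVec, ← Matrix.mul_assoc, ← pow_succ']
    rw [Finset.sum_congr rfl h2]
    have h3 : ((A ^ (d + 1 - 1 - d)) * B) = B := by simp
    rw [h3, h1]
    abel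

lemma sum_ite_reindex (g : ℕ → ℝ) (jv L : ℕ) (hj : jv < L) :
    ∑ j' ∈ Finset.range L, (if jv < j' then g j' else 0)
      = ∑ i ∈ Finset.range (L - 1 - jv), g (jv + 1 + i) := by
  have key : ∑ j' ∈ Finset.range L, (if jv < j' then g j' else 0)
      = ∑ j' ∈ Finset.Ico (jv + 1) L, g j' := by
    rw [Finset.range_eq_Ico,
      ← Finset.sum_Ico_consecutive _ (Nat.zero_le (jv + 1)) (by omega : jv + 1 ≤ L)]
    have h1 : ∑ j' ∈ Finset.Ico 0 (jv + 1), (if jv < j' then g j' else 0) = 0 := by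
      apply Finset.sum_eq_zero
      intro i hi
      rw [Finset.mem_Ico] at hi
      simp [Nat.not_lt.mpr (by omega : i ≤ jv)]
    have h2 : ∑ j' ∈ Finset.Ico (jv + 1) L, (if jv < j' then g j' else 0)
        = ∑ j' ∈ Finset.Ico (jv + 1) L, g j' := by
      apply Finset.sum_congr rfl
      intro i hi
      rw [Finset.mem_Ico] at hi
      simp [(by omega : jv < i)]
    rw [h1, h2, zero_add]
  rw [key, Finset.sum_Ico_eq_sum_range]
  have : L - (jv + 1) = L - 1 - jv := by omega
  rw [this]

theorem input_xi_data_matrix_rank_deficient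
    (n m p L N : ℕ) (hL : 1 ≤ L)
    (A : Matrix (Fin n) (Fin n) ℝ) (B : Matrix (Fin n) (Fin m) ℝ)
    (C : Matrix (Fin p) (Fin n) ℝ)
    (u : ℕ → Fin m → ℝ) (x : ℕ → Fin n → ℝ) (y : ℕ → Fin p → ℝ)
    (hdyn : ∀ t : ℕ, x (t + 1) = A.mulVec (x t) + B.mulVec (u t))
    (hout : ∀ t : ℕ, y t = C.mulVec (x t))
    (ts : Fin N → ℕ) (hts : ∀ k, L ≤ ts k)
    (D : Matrix (Fin m ⊕ ((Fin L × Fin m) ⊕ (Fin L × Fin p))) (Fin N) ℝ)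
    (hD : ∀ r k, D r k = Sum.elim (u (ts k)) (xiState m p L u y (ts k)) r) :
    D.rank ≤ m * (L + 1) + n ∧ (n < p * L → D.rank < m * (L + 1) + p * L) := by
  classical
  set M : Matrix (Fin m ⊕ ((Fin L × Fin m) ⊕ (Fin L × Fin p)))
      (Fin m ⊕ ((Fin L × Fin m) ⊕ Fin n)) ℝ :=
    fun r s => match r, s with
      | Sum.inl a, Sum.inl a' => if a = a' then 1 else 0
      | Sum.inr (Sum.inl jb), Sum.inr (Sum.inl jb') => if jb = jb' then 1 else 0
      | Sum.inr (Sum.inr jc), Sum.inr (Sum.inl j'b) =>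
          if (jc.1 : ℕ) < (j'b.1 : ℕ) then
            (C * (A ^ ((j'b.1 : ℕ) - (jc.1 : ℕ) - 1) * B)) jc.2 j'b.2 else 0
      | Sum.inr (Sum.inr jc), Sum.inr (Sum.inr i) => (C * A ^ (L - 1 - (jc.1 : ℕ))) jc.2 i
      | _, _ => 0 with hM
  set E : Matrix (Fin m ⊕ ((Fin L × Fin m) ⊕ Fin n)) (Fin N) ℝ :=
    fun s k => match s with
      | Sum.inl a => u (ts k) a
      | Sum.inr (Sum.inl jb) => u (ts k - 1 - (jb.1 : ℕ)) jb.2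
      | Sum.inr (Sum.inr i) => x (ts k - L) i with hE
  have hfac : D = M * E := by
    ext r k
    rcases r with a | r
    · rw [hD, Matrix.mul_apply]
      simp [Matrix.mul_apply, hM, hE, Fintype.sum_sum_type, ite_mul]
    rcases r with jb | jc
    · rw [hD, Matrix.mul_apply]
      simp [Matrix.mul_apply, hM, hE, Fintype.sum_sum_type, ite_mul, xiState, uStack]
    · obtain ⟨j, c⟩ := jc
      have hjL : (j : ℕ) < L := j.2
      have htk : L ≤ ts k := hts k
      set t := ts k with ht
      set d := L - 1 - (j : ℕ) with hd
      have hkey := state_sol A B u x hdyn (t - L) d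
      have harg : t - L + d = t - 1 - (j : ℕ) := by omega
      rw [harg] at hkey
      have lhs_eq : D (Sum.inr (Sum.inr (j, c))) k
          = (C.mulVec (x (t - 1 - (j : ℕ)))) c := by
        rw [hD]; simp [xiState, yStack, hout, ht]
      rw [lhs_eq, hkey, Matrix.mulVec_add, mulVec_sum']
      simp only [Pi.add_apply, Finset.sum_apply]
      rw [Matrix.mul_apply, Fintype.sum_sum_type, Fintype.sum_sum_type]
      have hz : ∑ a : Fin m, M (Sum.inr (Sum.inr (j, c))) (Sum.inl a) * E (Sum.inl a) k = 0 := by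
        simp [hM]
      have hx : ∑ i : Fin n, M (Sum.inr (Sum.inr (j, c))) (Sum.inr (Sum.inr i))
            * E (Sum.inr (Sum.inr i)) k
          = (C.mulVec ((A ^ d).mulVec (x (t - L)))) c := by
        rw [Matrix.mulVec_mulVec, Matrix.mulVec]
        simp [hM, hE, dotProduct, ht, hd]
      -- abbreviation for the generic summand
      set F : ℕ → ℝ := fun e =>
        ((C * (A ^ e * B)).mulVec (u (t - 2 - (j : ℕ) - e))) c with hF
      have hu : ∑ jb' : (Fin L × Fin m), M (Sum.inr (Sum.inr (j, c))) (Sum.inr (Sum.inl jb'))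
            * E (Sum.inr (Sum.inl jb')) k
          = ∑ i ∈ Finset.range d, F i := by
        rw [Fintype.sum_prod_type]
        have step1 : ∀ j' : Fin L,
            (∑ b : Fin m, M (Sum.inr (Sum.inr (j, c))) (Sum.inr (Sum.inl (j', b)))
                * E (Sum.inr (Sum.inl (j', b))) k)
            = (fun j'' : ℕ => if (j : ℕ) < j'' then
                ((C * (A ^ (j'' - (j : ℕ) - 1) * B)).mulVec (u (t - 1 - j''))) c
              else 0) (j' : ℕ) := by
          intro j'
          by_cases h : (j : ℕ) < (j' : ℕ)
          · simp only [hM, hE, if_pos h, Matrix.mulVec, dotProduct, ht]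
          · simp only [hM, hE, if_neg h, zero_mul, Finset.sum_const_zero]
        rw [Finset.sum_congr rfl (fun j' _ => step1 j'),
          Fin.sum_univ_eq_sum_range (fun j'' : ℕ => if (j : ℕ) < j'' then
            ((C * (A ^ (j'' - (j : ℕ) - 1) * B)).mulVec (u (t - 1 - j''))) c
            else 0) L,
          sum_ite_reindex _ _ _ hjL]
        rw [show L - 1 - (j : ℕ) = d from rfl]
        apply Finset.sum_congr rfl
        intro i hi
        rw [Finset.mem_range] at hi
        have e1 : (j : ℕ) + 1 + i - (j : ℕ) - 1 = i := by omega
        have e2 : t - 1 - ((j : ℕ) + 1 + i) = t - 2 - (j : ℕ) - i := by omega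
        rw [e1, e2, hF]
      have hsum : ∑ i ∈ Finset.range d,
            (C.mulVec (((A ^ (d - 1 - i)) * B).mulVec (u (t - L + i)))) c
          = ∑ i ∈ Finset.range d, F i := by
        rw [← Finset.sum_range_reflect F d]
        apply Finset.sum_congr rfl
        intro i hi
        rw [Finset.mem_range] at hi
        have e3 : t - 2 - (j : ℕ) - (d - 1 - i) = t - L + i := by omega
        show (C.mulVec (((A ^ (d - 1 - i)) * B).mulVec (u (t - L + i)))) c
          = ((C * (A ^ (d - 1 - i) * B)).mulVec (u (t - 2 - (j : ℕ) - (d - 1 - i)))) c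
        rw [e3, Matrix.mulVec_mulVec]
      rw [hz, hx, hu, zero_add, hsum]
      ring
  have hcard : Fintype.card (Fin m ⊕ ((Fin L × Fin m) ⊕ Fin n)) = m * (L + 1) + n := by
    simp [Fintype.card_sum, Fintype.card_prod]
    ring
  have h1 : D.rank ≤ m * (L + 1) + n := by
    rw [hfac]
    calc (M * E).rank ≤ E.rank := Matrix.rank_mul_le_right M E
      _ ≤ Fintype.card (Fin m ⊕ ((Fin L × Fin m) ⊕ Fin n)) := E.rank_le_card_height
      _ = m * (L + 1) + n := hcard
  exact ⟨h1, fun h => by omega⟩
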